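/- Let Φ : ℝ^N → Set(ℝ^N) be a monotone set-valued map, let Q, M be real N×N matrices with M invertible such that H := Q M⁻¹ is symmetric positive definite and D := Qᵀ + Q − Mᵀ H M is symmetric positive definite. Let sequences (ξ^k), (ξ̂^k), (V^k) in ℝ^N satisfy, for every k ≥ 0, Q(ξ^k − ξ̂^k) + V^k ∈ Φ(ξ̂^k) and ξ^{k+1} = ξ^k − M(ξ^k − ξ̂^k), with Σ_{k=0}^∞ ‖V^k‖ < ∞. If there exists ξ* with 0 ∈ Φ(ξ*), then the sequence (ξ^k) is bounded; in fact ‖ξ^k − ξ*‖_H ≤ ‖ξ^0 − ξ*‖_H + μ Σ_{j=0}^∞ ‖V^j‖ for all k, where μ = λ_min(H)^{−1/2} + λ_min(D)^{−1/2}. -/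

import Mathlib

open Matrix

lemma cs_dot {N : ℕ} (a b : Fin N → ℝ) :
    a ⬝ᵥ b ≤ Real.sqrt (a ⬝ᵥ a) * Real.sqrt (b ⬝ᵥ b) := by
  have h := Real.sum_mul_le_sqrt_mul_sqrt Finset.univ a b
  simpa [dotProduct, pow_two] using h

lemma psd_nonneg {N : ℕ} {A : Matrix (Fin N) (Fin N) ℝ} (hA : A.PosSemidef) (x : Fin N → ℝ) :
    0 ≤ x ⬝ᵥ A *ᵥ x := by
  simpa using hA.dotProduct_mulVec_nonneg x

lemma rayleigh_min {N : ℕ} {A : Matrix (Fin N) (Fin N) ℝ} (hA : A.IsHermitian) (x : Fin N → ℝ) :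
    (⨅ i, hA.eigenvalues i) * (x ⬝ᵥ x) ≤ x ⬝ᵥ A *ᵥ x := by
  rcases Nat.eq_zero_or_pos N with h0 | hN
  · subst h0
    simp [dotProduct]
  · have : Nonempty (Fin N) := Fin.pos_iff_nonempty.mp hN
    set U : Matrix (Fin N) (Fin N) ℝ := (hA.eigenvectorUnitary : Matrix (Fin N) (Fin N) ℝ) with hU
    set y : Fin N → ℝ := Uᵀ *ᵥ x with hy
    have hUU : U * Uᵀ = 1 := by
      have h := (Matrix.mem_unitaryGroup_iff).mp (hA.eigenvectorUnitary).2
      simpa [hU, Matrix.star_eq_conjTranspose,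
        Matrix.conjTranspose_eq_transpose_of_trivial] using h
    have hxx : x ⬝ᵥ x = y ⬝ᵥ y := by
      have : y ⬝ᵥ y = x ⬝ᵥ (U *ᵥ y) := by
        conv_lhs => rw [hy, mulVec_transpose, ← dotProduct_mulVec, ← mulVec_transpose, ← hy]
      rw [this, hy, mulVec_mulVec, hUU, one_mulVec]
    have hAx : x ⬝ᵥ A *ᵥ x = ∑ i, hA.eigenvalues i * (y i) ^ 2 := by
      conv_lhs => rw [hA.spectral_theorem]
      rw [Unitary.conjStarAlgAut_apply, Matrix.star_eq_conjTranspose, Matrix.conjTranspose_eq_transpose_of_trivial,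
        ← mulVec_mulVec, ← mulVec_mulVec, dotProduct_mulVec, ← mulVec_transpose, ← hy]
      simp only [dotProduct, Matrix.mulVec_diagonal, Function.comp_apply,
        RCLike.ofReal_real_eq_id, id_eq, pow_two]
      exact Finset.sum_congr rfl fun i _ => by ring
    rw [hxx, hAx, dotProduct, Finset.mul_sum]
    apply Finset.sum_le_sum
    intro i _
    have h1 : (⨅ j, hA.eigenvalues j) ≤ hA.eigenvalues i :=
      ciInf_le (Finite.bddBelow_range _) i
    nlinarith [sq_nonneg (y i)]

lemma lammin_pos {N : ℕ} (hN : 0 < N) {A : Matrix (Fin N) (Fin N) ℝ} (hA : A.PosDef) :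
    0 < ⨅ i, hA.1.eigenvalues i := by
  have : Nonempty (Fin N) := Fin.pos_iff_nonempty.mp hN
  obtain ⟨i, hi⟩ := exists_eq_ciInf_of_finite (f := fun i => hA.1.eigenvalues i)
  rw [← hi]
  exact hA.eigenvalues_pos i

lemma norm_le_H {N : ℕ} {A : Matrix (Fin N) (Fin N) ℝ} (hA : A.PosDef) (x : Fin N → ℝ)
    (hpos : 0 < ⨅ i, hA.1.eigenvalues i) :
    Real.sqrt (x ⬝ᵥ x) ≤ (Real.sqrt (⨅ i, hA.1.eigenvalues i))⁻¹ * Real.sqrt (x ⬝ᵥ A *ᵥ x) := by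
  have h1 : x ⬝ᵥ x ≤ (x ⬝ᵥ A *ᵥ x) / (⨅ i, hA.1.eigenvalues i) := by
    rw [le_div_iff₀ hpos]
    have := rayleigh_min hA.1 x
    nlinarith
  have h2 := Real.sqrt_le_sqrt h1
  rwa [Real.sqrt_div (psd_nonneg hA.posSemidef x), div_eq_inv_mul] at h2

lemma seq_bound (f v : ℕ → ℝ) (μ : ℝ) (hμ : 0 ≤ μ) (hv : ∀ k, 0 ≤ v k) (hsum : Summable v)
    (key : ∀ k, f (k + 1) ≤ f k + μ * v k) : ∀ k, f k ≤ f 0 + μ * ∑' j, v j := by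
  have h1 : ∀ k, f k ≤ f 0 + μ * ∑ j ∈ Finset.range k, v j := by
    intro k
    induction k with
    | zero => simp
    | succ n ih =>
      have h2 := key n
      rw [Finset.sum_range_succ, mul_add]
      linarith
  intro k
  have h2 := Summable.sum_le_tsum (Finset.range k) (fun i _ => hv i) hsum
  have h3 := h1 k
  nlinarith


lemma key_step {N : ℕ} (Q M H D : Matrix (Fin N) (Fin N) ℝ)
    (hHM : H * M = Q) (hHsym : Hᵀ = H) (hDdef : D = Qᵀ + Q - Mᵀ * H * M)
    (hH : H.PosDef) (hD : D.PosDef)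
    (hposH : 0 < ⨅ i, hH.1.eigenvalues i) (hposD : 0 < ⨅ i, hD.1.eigenvalues i)
    (x e w : Fin N → ℝ) (hmon : 0 ≤ (x - e) ⬝ᵥ (Q *ᵥ e + w)) :
    Real.sqrt ((x - M *ᵥ e) ⬝ᵥ H *ᵥ (x - M *ᵥ e)) ≤
      Real.sqrt (x ⬝ᵥ H *ᵥ x) +
        ((Real.sqrt (⨅ i, hH.1.eigenvalues i))⁻¹ +
          (Real.sqrt (⨅ i, hD.1.eigenvalues i))⁻¹) * Real.sqrt (w ⬝ᵥ w) := by
  set α : ℝ := (Real.sqrt (⨅ i, hH.1.eigenvalues i))⁻¹ with hαdef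
  set β : ℝ := (Real.sqrt (⨅ i, hD.1.eigenvalues i))⁻¹ with hβdef
  have hα : 0 ≤ α := inv_nonneg.mpr (Real.sqrt_nonneg _)
  have hβ : 0 ≤ β := inv_nonneg.mpr (Real.sqrt_nonneg _)
  have hsym : ∀ a b : Fin N → ℝ, a ⬝ᵥ H *ᵥ b = b ⬝ᵥ H *ᵥ a := by
    intro a b
    rw [dotProduct_mulVec, ← mulVec_transpose, hHsym, dotProduct_comm]
  set vk : ℝ := Real.sqrt (w ⬝ᵥ w) with hvk
  have hvk0 : 0 ≤ vk := Real.sqrt_nonneg _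
  have e2 : H *ᵥ (M *ᵥ e) = Q *ᵥ e := by rw [mulVec_mulVec, hHM]
  have e1 : (M *ᵥ e) ⬝ᵥ H *ᵥ x = x ⬝ᵥ Q *ᵥ e := by rw [hsym, e2]
  have e3 : (M *ᵥ e) ⬝ᵥ H *ᵥ (M *ᵥ e) = e ⬝ᵥ (Mᵀ * H * M) *ᵥ e := by
    rw [e2, mul_assoc, hHM, ← mulVec_mulVec]
    conv_rhs => rw [dotProduct_mulVec, vecMul_transpose]
  have expand : (x - M *ᵥ e) ⬝ᵥ H *ᵥ (x - M *ᵥ e)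
      = x ⬝ᵥ H *ᵥ x - 2 * (x ⬝ᵥ Q *ᵥ e) + e ⬝ᵥ (Mᵀ * H * M) *ᵥ e := by
    rw [mulVec_sub, dotProduct_sub, sub_dotProduct, sub_dotProduct, e3, e1, e2]
    ring
  have hexp : (x - e) ⬝ᵥ (Q *ᵥ e + w)
      = x ⬝ᵥ Q *ᵥ e - e ⬝ᵥ Q *ᵥ e + (x ⬝ᵥ w - e ⬝ᵥ w) := by
    rw [dotProduct_add, sub_dotProduct, sub_dotProduct]
  rw [hexp] at hmon
  have hDe : e ⬝ᵥ D *ᵥ e = 2 * (e ⬝ᵥ Q *ᵥ e) - e ⬝ᵥ (Mᵀ * H * M) *ᵥ e := by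
    rw [hDdef, sub_mulVec, add_mulVec, dotProduct_sub, dotProduct_add]
    have hQt : e ⬝ᵥ Qᵀ *ᵥ e = e ⬝ᵥ Q *ᵥ e := by
      rw [dotProduct_mulVec, vecMul_transpose, dotProduct_comm]
    rw [hQt]
    ring
  have step1 : (x - M *ᵥ e) ⬝ᵥ H *ᵥ (x - M *ᵥ e)
      ≤ x ⬝ᵥ H *ᵥ x - e ⬝ᵥ D *ᵥ e + 2 * (x ⬝ᵥ w - e ⬝ᵥ w) := by
    rw [expand, hDe]
    linarith
  have ha : 0 ≤ x ⬝ᵥ H *ᵥ x := psd_nonneg hH.posSemidef x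
  have hb : 0 ≤ e ⬝ᵥ D *ᵥ e := psd_nonneg hD.posSemidef e
  set a : ℝ := Real.sqrt (x ⬝ᵥ H *ᵥ x) with hadef
  set b : ℝ := Real.sqrt (e ⬝ᵥ D *ᵥ e) with hbdef
  have ha0 : 0 ≤ a := Real.sqrt_nonneg _
  have hb0 : 0 ≤ b := Real.sqrt_nonneg _
  have ha2 : a ^ 2 = x ⬝ᵥ H *ᵥ x := Real.sq_sqrt ha
  have hb2 : b ^ 2 = e ⬝ᵥ D *ᵥ e := Real.sq_sqrt hb
  have hCx : x ⬝ᵥ w ≤ α * a * vk := by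
    have h1 := cs_dot x w
    have h2 := norm_le_H hH x hposH
    have h3 : Real.sqrt (x ⬝ᵥ x) * vk ≤ α * a * vk :=
      mul_le_mul_of_nonneg_right h2 hvk0
    have h4 : x ⬝ᵥ w ≤ Real.sqrt (x ⬝ᵥ x) * vk := h1
    linarith
  have hCe : -(e ⬝ᵥ w) ≤ β * b * vk := by
    have h1 := cs_dot (-e) w
    rw [neg_dotProduct, neg_dotProduct, dotProduct_neg, neg_neg] at h1
    have h2 := norm_le_H hD e hposD
    have h3 : Real.sqrt (e ⬝ᵥ e) * vk ≤ β * b * vk :=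
      mul_le_mul_of_nonneg_right h2 hvk0
    linarith
  have goal2 : (x - M *ᵥ e) ⬝ᵥ H *ᵥ (x - M *ᵥ e) ≤ (a + (α + β) * vk) ^ 2 := by
    nlinarith [step1, hCx, hCe, sq_nonneg (b - β * vk),
      mul_nonneg ha0 (mul_nonneg hβ hvk0),
      mul_nonneg (mul_nonneg hα hvk0) (mul_nonneg hβ hvk0),
      mul_nonneg (mul_nonneg hα hvk0) (mul_nonneg hα hvk0)]
  calc Real.sqrt ((x - M *ᵥ e) ⬝ᵥ H *ᵥ (x - M *ᵥ e))
      ≤ Real.sqrt ((a + (α + β) * vk) ^ 2) := Real.sqrt_le_sqrt goal2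
    _ = a + (α + β) * vk :=
        Real.sqrt_sq (add_nonneg ha0 (mul_nonneg (add_nonneg hα hβ) hvk0))

/-- Boundedness of the inexact prediction–correction sequence: with summable
error norms, `‖ξ^k − ξ*‖_H ≤ ‖ξ^0 − ξ*‖_H + μ Σ_j ‖V^j‖` for all `k`, where
`μ = λ_min(H)^{-1/2} + λ_min(D)^{-1/2}`; in particular the sequence is bounded. -/
theorem stmt7 {N : ℕ} (Φ : (Fin N → ℝ) → Set (Fin N → ℝ))
    (hmono : ∀ u v p q, p ∈ Φ u → q ∈ Φ v → 0 ≤ (u - v) ⬝ᵥ (p - q))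
    (Q M : Matrix (Fin N) (Fin N) ℝ) (hM : IsUnit M.det)
    (hH : (Q * M⁻¹).PosDef)
    (hD : (Qᵀ + Q - Mᵀ * (Q * M⁻¹) * M).PosDef)
    (ξ ξhat V : ℕ → Fin N → ℝ)
    (hincl : ∀ k, Q.mulVec (ξ k - ξhat k) + V k ∈ Φ (ξhat k))
    (hiter : ∀ k, ξ (k + 1) = ξ k - M.mulVec (ξ k - ξhat k))
    (hsum : Summable (fun k => Real.sqrt (V k ⬝ᵥ V k)))
    (ξstar : Fin N → ℝ) (hstar : (0 : Fin N → ℝ) ∈ Φ ξstar) :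
    Bornology.IsBounded (Set.range ξ) ∧
      ∀ k, Real.sqrt ((ξ k - ξstar) ⬝ᵥ (Q * M⁻¹).mulVec (ξ k - ξstar)) ≤
        Real.sqrt ((ξ 0 - ξstar) ⬝ᵥ (Q * M⁻¹).mulVec (ξ 0 - ξstar)) +
          ((Real.sqrt (⨅ i, hH.1.eigenvalues i))⁻¹ +
            (Real.sqrt (⨅ i, hD.1.eigenvalues i))⁻¹) *
            (∑' j, Real.sqrt (V j ⬝ᵥ V j)) := by
  classical
  rcases Nat.eq_zero_or_pos N with h0 | hN
  · subst h0
    constructor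
    · exact (Set.subsingleton_of_subsingleton (s := Set.range ξ)).finite.isBounded
    · intro k
      simp [dotProduct]
  have hposH : 0 < ⨅ i, hH.1.eigenvalues i := lammin_pos hN hH
  have hposD : 0 < ⨅ i, hD.1.eigenvalues i := lammin_pos hN hD
  have hα : 0 ≤ (Real.sqrt (⨅ i, hH.1.eigenvalues i))⁻¹ :=
    inv_nonneg.mpr (Real.sqrt_nonneg _)
  have hβ : 0 ≤ (Real.sqrt (⨅ i, hD.1.eigenvalues i))⁻¹ :=
    inv_nonneg.mpr (Real.sqrt_nonneg _)
  have hHsym : (Q * M⁻¹)ᵀ = Q * M⁻¹ := by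
    rw [← Matrix.conjTranspose_eq_transpose_of_trivial]
    exact hH.1
  have hHM : Q * M⁻¹ * M = Q := by
    rw [mul_assoc, Matrix.nonsing_inv_mul M hM, mul_one]
  have key : ∀ k, Real.sqrt ((ξ (k + 1) - ξstar) ⬝ᵥ (Q * M⁻¹) *ᵥ (ξ (k + 1) - ξstar)) ≤
      Real.sqrt ((ξ k - ξstar) ⬝ᵥ (Q * M⁻¹) *ᵥ (ξ k - ξstar)) +
        ((Real.sqrt (⨅ i, hH.1.eigenvalues i))⁻¹ +
          (Real.sqrt (⨅ i, hD.1.eigenvalues i))⁻¹) * Real.sqrt (V k ⬝ᵥ V k) := by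
    intro k
    have hmon := hmono (ξhat k) ξstar (Q *ᵥ (ξ k - ξhat k) + V k) 0 (hincl k) hstar
    rw [sub_zero] at hmon
    have hhat : ξhat k - ξstar = (ξ k - ξstar) - (ξ k - ξhat k) := by abel
    rw [hhat] at hmon
    have hx' : ξ (k + 1) - ξstar = (ξ k - ξstar) - M *ᵥ (ξ k - ξhat k) := by
      rw [hiter k]
      exact sub_right_comm _ _ _
    rw [hx']
    exact key_step Q M (Q * M⁻¹) _ hHM hHsym rfl hH hD hposH hposD
      (ξ k - ξstar) (ξ k - ξhat k) (V k) hmon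
  have main := seq_bound
    (fun k => Real.sqrt ((ξ k - ξstar) ⬝ᵥ (Q * M⁻¹) *ᵥ (ξ k - ξstar)))
    (fun k => Real.sqrt (V k ⬝ᵥ V k))
    ((Real.sqrt (⨅ i, hH.1.eigenvalues i))⁻¹ + (Real.sqrt (⨅ i, hD.1.eigenvalues i))⁻¹)
    (add_nonneg hα hβ) (fun k => Real.sqrt_nonneg _) hsum key
  refine ⟨?_, main⟩
  set S : ℝ := ∑' j, Real.sqrt (V j ⬝ᵥ V j) with hS
  set R : ℝ := (Real.sqrt (⨅ i, hH.1.eigenvalues i))⁻¹ *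
    (Real.sqrt ((ξ 0 - ξstar) ⬝ᵥ (Q * M⁻¹) *ᵥ (ξ 0 - ξstar)) +
      ((Real.sqrt (⨅ i, hH.1.eigenvalues i))⁻¹ +
        (Real.sqrt (⨅ i, hD.1.eigenvalues i))⁻¹) * S) with hR
  have hsub : Set.range ξ ⊆ Metric.closedBall ξstar R := by
    rintro _ ⟨k, rfl⟩
    rw [Metric.mem_closedBall, dist_eq_norm]
    have hnorm : ‖ξ k - ξstar‖ ≤ Real.sqrt ((ξ k - ξstar) ⬝ᵥ (ξ k - ξstar)) := by
      apply pi_norm_le_iff_of_nonneg (Real.sqrt_nonneg _) |>.mpr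
      intro i
      rw [Real.norm_eq_abs]
      apply Real.abs_le_sqrt
      rw [dotProduct, pow_two]
      exact Finset.single_le_sum (f := fun j => (ξ k - ξstar) j * (ξ k - ξstar) j)
        (fun j _ => mul_self_nonneg _) (Finset.mem_univ i)
    have h2 := norm_le_H hH (ξ k - ξstar) hposH
    have h3 := main k
    calc ‖ξ k - ξstar‖ ≤ Real.sqrt ((ξ k - ξstar) ⬝ᵥ (ξ k - ξstar)) := hnorm
      _ ≤ (Real.sqrt (⨅ i, hH.1.eigenvalues i))⁻¹ *
            Real.sqrt ((ξ k - ξstar) ⬝ᵥ (Q * M⁻¹) *ᵥ (ξ k - ξstar)) := h2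
      _ ≤ R := by
          rw [hR]
          exact mul_le_mul_of_nonneg_left h3 hα
  exact Metric.isBounded_closedBall.subset hsub
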